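/- Chinese remainder decomposition: let N = 2^K and g ∈ ℚ[χ]/⟨1+χ+⋯+χ^{N-1}⟩. If for each 0 ≤ l ≤ K-1 the element g_l ∈ ℚ[χ]/⟨1+χ+⋯+χ^{N-1}⟩ satisfies pr_l(g_l) = pr_l(g), where pr_l is the projection to ℚ[χ]/⟨1+χ^{2^l}⟩, then g = Σ_{l=0}^{K-1} 2^{l-K} · g_l · (1-χ) · ∏_{0≤r≤K-1, r≠l} (1+χ^{2^r}). -/

import Mathlib

open Polynomial
section Aux
open Finset

lemma aux_ne (n : ℕ) : (1 + X ^ n : ℚ[X]) ≠ 0 := fun h => by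
  have := congrArg (eval 1) h; simp at this

lemma aux_prodA (m : ℕ) :
    ((1 : ℚ[X]) - X) * ∏ r ∈ range m, (1 + X ^ 2 ^ r) = 1 - X ^ 2 ^ m := by
  induction m with
  | zero => simp
  | succ m ih =>
      rw [prod_range_succ, ← mul_assoc, ih, pow_succ 2 m, pow_mul]
      ring

lemma aux_prodB (K : ℕ) :
    (∑ i ∈ range (2 ^ K), X ^ i : ℚ[X]) = ∏ r ∈ range K, (1 + X ^ 2 ^ r) := by
  apply mul_right_cancel₀ (b := (X : ℚ[X]) - 1) (by
    intro h; have := congrArg (eval 0) h; simp at this)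
  rw [geom_sum_mul]
  have := aux_prodA K
  have h2 : (∏ r ∈ range K, (1 + X ^ 2 ^ r) : ℚ[X]) * (X - 1) =
      -(((1 : ℚ[X]) - X) * ∏ r ∈ range K, (1 + X ^ 2 ^ r)) := by ring
  rw [h2, this]; ring

lemma aux_dvd_two {m r : ℕ} (h : m < r) :
    (1 + X ^ 2 ^ m : ℚ[X]) ∣ (1 + X ^ 2 ^ r) - 2 := by
  have h1 : ((1 : ℚ[X]) + X ^ 2 ^ r) - 2 = X ^ 2 ^ r - 1 := by ring
  rw [h1]
  have h2 : (2 : ℕ) ^ r = 2 ^ (m + 1) * 2 ^ (r - m - 1) := by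
    rw [← pow_add]; congr 1; omega
  rw [h2, pow_mul]
  have hd : (X : ℚ[X]) ^ 2 ^ (m + 1) - 1 ∣ (X ^ 2 ^ (m + 1)) ^ 2 ^ (r - m - 1) - 1 := by
    simpa using sub_dvd_pow_sub_pow ((X : ℚ[X]) ^ 2 ^ (m + 1)) 1 (2 ^ (r - m - 1))
  refine dvd_trans ?_ hd
  have : (X : ℚ[X]) ^ 2 ^ (m + 1) - 1 = (X ^ 2 ^ m - 1) * (1 + X ^ 2 ^ m) := by
    rw [pow_succ 2 m, pow_mul]; ring
  rw [this]; exact dvd_mul_left _ _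

lemma aux_coprime {l r : ℕ} (h : l < r) :
    IsCoprime ((1 + X ^ 2 ^ l : ℚ[X])) (1 + X ^ 2 ^ r) := by
  obtain ⟨d, hd⟩ := aux_dvd_two h
  have h2 : (C ((1:ℚ)/2) : ℚ[X]) * 2 = 1 := by
    rw [show (2 : ℚ[X]) = C 2 from (map_ofNat C 2).symm, ← C_mul]; norm_num
  exact ⟨-(C ((1:ℚ)/2) * d), C ((1:ℚ)/2), by linear_combination (C ((1:ℚ)/2)) * hd + h2⟩

lemma aux_erase_split {m K : ℕ} (hm : m < K) (f : ℕ → ℚ[X]) (hf : f m ≠ 0) :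
    ∏ r ∈ (range K).erase m, f r = (∏ r ∈ range m, f r) * ∏ r ∈ Ico (m+1) K, f r := by
  apply mul_left_cancel₀ hf
  rw [Finset.mul_prod_erase _ f (mem_range.mpr hm)]
  have h1 : f m * ((∏ r ∈ range m, f r) * ∏ r ∈ Ico (m+1) K, f r)
      = (∏ r ∈ range (m+1), f r) * ∏ r ∈ Ico (m+1) K, f r := by
    rw [prod_range_succ]; ring
  rw [h1, Finset.range_eq_Ico]
  rw [← Finset.range_eq_Ico]; exact (Finset.prod_range_mul_prod_Ico f (by omega)).symm

lemma aux_main {K : ℕ} (g : ℚ[X]) (gl : ℕ → ℚ[X]) {m : ℕ} (hm : m < K)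
    (hg : Ideal.Quotient.mk (Ideal.span {(1 + X ^ 2 ^ m : ℚ[X])}) (gl m) =
          Ideal.Quotient.mk (Ideal.span {(1 + X ^ 2 ^ m : ℚ[X])}) g) :
    (1 + X ^ 2 ^ m : ℚ[X]) ∣
      g - ∑ l ∈ range K, (C ((2:ℚ)^l / 2^K) * gl l * (1 - X) *
        ∏ r ∈ (range K).erase l, (1 + X ^ 2 ^ r)) := by
  set J : Ideal ℚ[X] := Ideal.span {(1 + X ^ 2 ^ m : ℚ[X])} with hJ
  set π : ℚ[X] →+* ℚ[X] ⧸ J := (Ideal.Quotient.mk J : ℚ[X] →+* ℚ[X] ⧸ J) with hπ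
  rw [← Ideal.mem_span_singleton, ← hJ, ← Ideal.Quotient.eq_zero_iff_mem]
  show π _ = 0
  have hx0 : π (1 + X ^ 2 ^ m) = 0 :=
    Ideal.Quotient.eq_zero_iff_mem.mpr (Ideal.subset_span (Set.mem_singleton _))
  have h2 : (π 2 : ℚ[X] ⧸ J) = 2 := map_ofNat π 2
  have htwo : ∀ r, m < r → π (1 + X ^ 2 ^ r) = 2 := by
    intro r hr
    have h0 : π ((1 + X ^ 2 ^ r) - 2) = 0 :=
      Ideal.Quotient.eq_zero_iff_mem.mpr
        (Ideal.mem_span_singleton.mpr (aux_dvd_two hr))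
    rw [← h2, ← sub_eq_zero, ← map_sub]; exact h0
  -- the sum collapses to the m-th term
  rw [map_sub, map_sum]
  have hsum : ∑ l ∈ range K, π (C ((2:ℚ)^l / 2^K) * gl l * (1 - X) *
        ∏ r ∈ (range K).erase l, (1 + X ^ 2 ^ r)) =
      π (C ((2:ℚ)^m / 2^K) * gl m * (1 - X) *
        ∏ r ∈ (range K).erase m, (1 + X ^ 2 ^ r)) := by
    refine Finset.sum_eq_single_of_mem m (mem_range.mpr hm) ?_
    intro l _ hlm
    rw [map_mul, map_prod]
    have : π (1 + X ^ 2 ^ m) = 0 := hx0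
    rw [Finset.prod_eq_zero (Finset.mem_erase.mpr ⟨(Ne.symm hlm), mem_range.mpr hm⟩) this,
      mul_zero]
  rw [hsum]
  -- compute the m-th term
  have hpoly : C ((2:ℚ)^m / 2^K) * gl m * (1 - X) *
        ∏ r ∈ (range K).erase m, (1 + X ^ 2 ^ r) =
      C ((2:ℚ)^m / 2^K) * gl m *
        ((1 - X ^ 2 ^ m) * ∏ r ∈ Ico (m+1) K, (1 + X ^ 2 ^ r)) := by
    rw [aux_erase_split hm _ (aux_ne (2 ^ m)), ← aux_prodA m]; ring
  rw [hpoly]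
  have hA : π (1 - X ^ 2 ^ m) = 2 := by
    have : (1 - X ^ 2 ^ m : ℚ[X]) = 2 - (1 + X ^ 2 ^ m) := by ring
    rw [this, map_sub, hx0, sub_zero, h2]
  have hB : π (∏ r ∈ Ico (m+1) K, (1 + X ^ 2 ^ r)) = 2 ^ (K - m - 1) := by
    rw [map_prod]
    rw [Finset.prod_congr rfl (fun r hr => htwo r (by
      have := Finset.mem_Ico.mp hr; omega))]
    rw [Finset.prod_const, Nat.card_Ico]
    congr 1
  have hgm : π (gl m) = π g := hg
  rw [map_mul, map_mul, map_mul, hA, hB, hgm]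
  have hCc : π (C ((2:ℚ)^m / 2^K)) * (2 * 2 ^ (K - m - 1)) = 1 := by
    have e1 : (2 * 2 ^ (K - m - 1) : ℚ[X] ⧸ J) = 2 ^ (K - m) := by
      rw [← pow_succ']
      congr 1
      omega
    have e2 : ((2 : ℚ[X] ⧸ J)) ^ (K - m) = π (C ((2:ℚ) ^ (K - m))) := by
      rw [map_pow C (2:ℚ) (K-m), map_ofNat C 2, map_pow, h2]
    have e3 : (2:ℚ)^m / 2^K * 2 ^ (K - m) = 1 := by
      rw [div_mul_eq_mul_div, ← pow_add, show m + (K - m) = K by omega]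
      exact div_self (by positivity)
    rw [e1, e2, ← map_mul, ← C_mul, e3]
    simp
  calc π g - π (C ((2:ℚ)^m / 2^K)) * π g * (2 * 2 ^ (K - m - 1))
      = π g - (π (C ((2:ℚ)^m / 2^K)) * (2 * 2 ^ (K - m - 1))) * π g := by ring
    _ = 0 := by rw [hCc, one_mul, sub_self]

end Aux
open Finset

/-- Chinese remainder decomposition: if pr_l(g_l) = pr_l(g) for all 0 ≤ l ≤ K-1 then
g = Σ_l 2^{l-K} · g_l · (1-χ) · ∏_{r≠l} (1+χ^{2^r}) in ℚ[χ]/⟨1+χ+⋯+χ^{2^K-1}⟩. -/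
theorem stmt4 (K : ℕ) (hK : 1 ≤ K) (g : Polynomial ℚ) (gl : ℕ → Polynomial ℚ)
    (h : ∀ l < K,
      Ideal.Quotient.mk (Ideal.span {(1 + X ^ (2 ^ l) : Polynomial ℚ)}) (gl l) =
      Ideal.Quotient.mk (Ideal.span {(1 + X ^ (2 ^ l) : Polynomial ℚ)}) g) :
    Ideal.Quotient.mk (Ideal.span {(∑ i ∈ Finset.range (2 ^ K), X ^ i : Polynomial ℚ)}) g =
      ∑ l ∈ Finset.range K,
        Ideal.Quotient.mk (Ideal.span {(∑ i ∈ Finset.range (2 ^ K), X ^ i : Polynomial ℚ)})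
          (C ((2 : ℚ) ^ l / 2 ^ K) * gl l * (1 - X) *
            ∏ r ∈ (Finset.range K).erase l, (1 + X ^ (2 ^ r))) := by
  rw [← map_sum]
  rw [Ideal.Quotient.eq, Ideal.mem_span_singleton, aux_prodB]
  apply Finset.prod_dvd_of_coprime
  · intro a _ b _ hab
    rcases lt_or_gt_of_ne hab with hlt | hlt
    · exact aux_coprime hlt
    · exact (aux_coprime hlt).symm
  · intro i hi
    exact aux_main g gl (mem_range.mp hi) (h i (mem_range.mp hi))
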